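/- Let C₁ ⊆ F₂ⁿ be a (d₁, r)-perfect code and C₂ ⊆ F₂ᵐ a (d₂, s)-perfect code, where d₁ and d₂ are TS-metrics and r, s > 0. Then there exist a TS-metric d on F₂ⁿ × F₂ᵐ ≅ F₂^{n+m} and a radius t > 0 such that C₁ × C₂ is a (d, t)-perfect code. -/
import Mathlib


open Set Function

/-- A weight on a binary vector space `ι → ZMod 2`. -/
def IsWeight {ι : Type*} (ω : (ι → ZMod 2) → ℝ) : Prop :=
  (∀ x, 0 ≤ ω x) ∧ (∀ x, ω x = 0 ↔ x = 0) ∧ ∀ x y, ω (x + y) ≤ ω x + ω y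

/-- A function respects the support of vectors. -/
def RespectsSupport {ι : Type*} (ω : (ι → ZMod 2) → ℝ) : Prop :=
  ∀ x y : ι → ZMod 2, Function.support x ⊆ Function.support y → ω x ≤ ω y

/-- A TS-metric: a (translation-invariant) metric determined by a weight
that respects support, i.e. `d x y = ω (x + y)` (note `-y = y` in char 2). -/
def IsTSMetric {ι : Type*} (d : (ι → ZMod 2) → (ι → ZMod 2) → ℝ) : Prop :=
  ∃ ω, IsWeight ω ∧ RespectsSupport ω ∧ ∀ x y, d x y = ω (x + y)

/-- The ball `B_d(x, r)`. -/
def tsBall {ι : Type*} (d : (ι → ZMod 2) → (ι → ZMod 2) → ℝ) (x : ι → ZMod 2) (r : ℝ) :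
    Set (ι → ZMod 2) := {y | d x y ≤ r}

/-- `(D, C)` is a tiling: the translates `c + D`, `c ∈ C`, are pairwise disjoint
and cover the whole space. -/
def IsTiling {ι : Type*} (D C : Set (ι → ZMod 2)) : Prop :=
  (⋃ c ∈ C, (c + ·) '' D) = Set.univ ∧
  C.Pairwise fun c c' => Disjoint ((c + ·) '' D) ((c' + ·) '' D)

/-- `C` is a `(d, r)`-perfect code: the balls of radius `r` centered at codewords
are pairwise disjoint and cover the whole space. -/
def IsPerfectCode {ι : Type*} (d : (ι → ZMod 2) → (ι → ZMod 2) → ℝ) (r : ℝ)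
    (C : Set (ι → ZMod 2)) : Prop :=
  (⋃ c ∈ C, tsBall d c r) = Set.univ ∧
  C.Pairwise fun c c' => Disjoint (tsBall d c r) (tsBall d c' r)

/-- A polyhedromino: any two points of `D` are joined by a geodesic path
(w.r.t. the Hamming distance) lying inside `D`. -/
def IsPolyhedromino {ι : Type*} [Fintype ι] (D : Set (ι → ZMod 2)) : Prop :=
  ∀ x ∈ D, ∀ y ∈ D, ∃ γ : ℕ → (ι → ZMod 2),
    γ 0 = x ∧ γ (hammingDist x y) = y ∧
    (∀ i ≤ hammingDist x y, γ i ∈ D) ∧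
    ∀ i < hammingDist x y, hammingDist (γ i) (γ (i + 1)) = 1

/-- A poly-tiling: a tiling whose tile is a polyhedromino. -/
def IsPolyTiling {ι : Type*} [Fintype ι] (D C : Set (ι → ZMod 2)) : Prop :=
  IsTiling D C ∧ IsPolyhedromino D

/-- The vector `e_i` with support `{i}`. -/
def unitVec {ι : Type*} [DecidableEq ι] (i : ι) : ι → ZMod 2 := Pi.single i 1

/-- The `F`-combinatorial weight: the minimal number of members of `F` needed
to cover the support of `x`. -/
noncomputable def combWeight {ι : Type*} [DecidableEq ι] (F : Finset (Finset ι))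
    (x : ι → ZMod 2) : ℕ :=
  sInf {k | ∃ A : Finset (Finset ι), A ⊆ F ∧ A.card = k ∧ Function.support x ⊆ ↑(A.sup id)}

/-- The axioms of a metric. -/
def IsMetric {α : Type*} (d : α → α → ℝ) : Prop :=
  (∀ x y, d x y = 0 ↔ x = y) ∧ (∀ x y, d x y = d y x) ∧ ∀ x y z, d x z ≤ d x y + d y z

/-- The max-metric on the product (concatenation) space, identified with
functions on `Fin n ⊕ Fin m`. -/
def dmax {n m : ℕ} (d₁ : (Fin n → ZMod 2) → (Fin n → ZMod 2) → ℝ)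
    (d₂ : (Fin m → ZMod 2) → (Fin m → ZMod 2) → ℝ)
    (w w' : Fin n ⊕ Fin m → ZMod 2) : ℝ :=
  max (d₁ (fun i => w (Sum.inl i)) (fun i => w' (Sum.inl i)))
      (d₂ (fun j => w (Sum.inr j)) (fun j => w' (Sum.inr j)))

/-- if `C₁` is a `(d₁, r)`-perfect code and `C₂` is a `(d₂, s)`-perfect code
for TS-metrics `d₁, d₂` and radii `r, s > 0`, then there are a TS-metric `d` on
`F₂^{n+m}` (as functions on `Fin n ⊕ Fin m`) and a radius `t > 0` making
`C₁ × C₂` a `(d, t)`-perfect code. -/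
theorem stmt_19 {n m : ℕ} (d₁ : (Fin n → ZMod 2) → (Fin n → ZMod 2) → ℝ)
    (d₂ : (Fin m → ZMod 2) → (Fin m → ZMod 2) → ℝ) (r s : ℝ)
    (C₁ : Set (Fin n → ZMod 2)) (C₂ : Set (Fin m → ZMod 2))
    (hd₁ : IsTSMetric d₁) (hd₂ : IsTSMetric d₂) (hr : 0 < r) (hs : 0 < s)
    (h₁ : IsPerfectCode d₁ r C₁) (h₂ : IsPerfectCode d₂ s C₂) :
    ∃ (d : (Fin n ⊕ Fin m → ZMod 2) → (Fin n ⊕ Fin m → ZMod 2) → ℝ) (t : ℝ),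
      IsTSMetric d ∧ 0 < t ∧
      IsPerfectCode d t
        (Set.image2 (fun (u : Fin n → ZMod 2) (v : Fin m → ZMod 2) => Sum.elim u v) C₁ C₂) := by
  obtain ⟨ω₁, ⟨hw1n, hw1z, hw1a⟩, hrs₁, hdw₁⟩ := hd₁
  obtain ⟨ω₂, ⟨hw2n, hw2z, hw2a⟩, hrs₂, hdw₂⟩ := hd₂
  refine ⟨fun x y => max (d₁ (fun i => x (Sum.inl i)) (fun i => y (Sum.inl i)) / r)
      (d₂ (fun j => x (Sum.inr j)) (fun j => y (Sum.inr j)) / s), 1, ?_, one_pos, ?_, ?_⟩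
  · refine ⟨fun x => max (ω₁ (fun i => x (Sum.inl i)) / r) (ω₂ (fun j => x (Sum.inr j)) / s),
      ⟨fun x => le_max_of_le_left (div_nonneg (hw1n _) hr.le), fun x => ?_, fun x y => ?_⟩,
      fun x y hxy => ?_, fun x y => ?_⟩
    · show max (ω₁ (fun i => x (Sum.inl i)) / r) (ω₂ (fun j => x (Sum.inr j)) / s) = 0 ↔ x = 0
      constructor
      · intro h
        have h1 : ω₁ (fun i => x (Sum.inl i)) / r ≤ 0 := h ▸ le_max_left _ _
        have h2 : ω₂ (fun j => x (Sum.inr j)) / s ≤ 0 := h ▸ le_max_right _ _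
        have h1' : ω₁ (fun i => x (Sum.inl i)) / r = 0 :=
          le_antisymm h1 (div_nonneg (hw1n _) hr.le)
        have h2' : ω₂ (fun j => x (Sum.inr j)) / s = 0 :=
          le_antisymm h2 (div_nonneg (hw2n _) hs.le)
        rw [div_eq_zero_iff] at h1' h2'
        have e1 : (fun i => x (Sum.inl i)) = 0 :=
          (hw1z _).mp (h1'.resolve_right hr.ne')
        have e2 : (fun j => x (Sum.inr j)) = 0 :=
          (hw2z _).mp (h2'.resolve_right hs.ne')
        funext z
        cases z with
        | inl i => exact congrFun e1 i
        | inr j => exact congrFun e2 j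
      · rintro rfl
        have e1 : (fun i => (0 : Fin n ⊕ Fin m → ZMod 2) (Sum.inl i)) = (0 : Fin n → ZMod 2) := rfl
        have e2 : (fun j => (0 : Fin n ⊕ Fin m → ZMod 2) (Sum.inr j)) = (0 : Fin m → ZMod 2) := rfl
        rw [e1, e2, (hw1z 0).mpr rfl, (hw2z 0).mpr rfl, zero_div, zero_div, max_self]
    · show max (ω₁ (fun i => (x + y) (Sum.inl i)) / r) (ω₂ (fun j => (x + y) (Sum.inr j)) / s) ≤
        max (ω₁ (fun i => x (Sum.inl i)) / r) (ω₂ (fun j => x (Sum.inr j)) / s) +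
        max (ω₁ (fun i => y (Sum.inl i)) / r) (ω₂ (fun j => y (Sum.inr j)) / s)
      have e1 : (fun i => (x + y) (Sum.inl i)) = (fun i => x (Sum.inl i)) + (fun i => y (Sum.inl i)) := rfl
      have e2 : (fun j => (x + y) (Sum.inr j)) = (fun j => x (Sum.inr j)) + (fun j => y (Sum.inr j)) := rfl
      rw [e1, e2]
      refine max_le ?_ ?_
      · calc ω₁ _ / r ≤ (ω₁ (fun i => x (Sum.inl i)) + ω₁ (fun i => y (Sum.inl i))) / r :=
          div_le_div_of_nonneg_right (hw1a _ _) hr.le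
        _ = ω₁ (fun i => x (Sum.inl i)) / r + ω₁ (fun i => y (Sum.inl i)) / r := add_div _ _ _
        _ ≤ _ := add_le_add (le_max_left _ _) (le_max_left _ _)
      · calc ω₂ _ / s ≤ (ω₂ (fun j => x (Sum.inr j)) + ω₂ (fun j => y (Sum.inr j))) / s :=
          div_le_div_of_nonneg_right (hw2a _ _) hs.le
        _ = ω₂ (fun j => x (Sum.inr j)) / s + ω₂ (fun j => y (Sum.inr j)) / s := add_div _ _ _
        _ ≤ _ := add_le_add (le_max_right _ _) (le_max_right _ _)
    · show max (ω₁ (fun i => x (Sum.inl i)) / r) (ω₂ (fun j => x (Sum.inr j)) / s) ≤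
        max (ω₁ (fun i => y (Sum.inl i)) / r) (ω₂ (fun j => y (Sum.inr j)) / s)
      refine max_le_max (div_le_div_of_nonneg_right (hrs₁ _ _ fun i hi => ?_) hr.le)
        (div_le_div_of_nonneg_right (hrs₂ _ _ fun j hj => ?_) hs.le)
      · exact hxy hi
      · exact hxy hj
    · show max (d₁ _ _ / r) (d₂ _ _ / s) =
        max (ω₁ (fun i => (x + y) (Sum.inl i)) / r) (ω₂ (fun j => (x + y) (Sum.inr j)) / s)
      rw [hdw₁, hdw₂]
      rfl
  · ext w
    simp only [Set.mem_iUnion, Set.mem_univ, iff_true]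
    have hw1 : (fun i => w (Sum.inl i)) ∈ ⋃ c ∈ C₁, tsBall d₁ c r := h₁.1 ▸ Set.mem_univ _
    have hw2 : (fun j => w (Sum.inr j)) ∈ ⋃ c ∈ C₂, tsBall d₂ c s := h₂.1 ▸ Set.mem_univ _
    simp only [Set.mem_iUnion] at hw1 hw2
    obtain ⟨c₁, hc₁, hb₁⟩ := hw1
    obtain ⟨c₂, hc₂, hb₂⟩ := hw2
    refine ⟨Sum.elim c₁ c₂, Set.mem_image2_of_mem hc₁ hc₂, ?_⟩
    show max (d₁ _ _ / r) (d₂ _ _ / s) ≤ 1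
    exact max_le ((div_le_one hr).mpr hb₁) ((div_le_one hs).mpr hb₂)
  · rintro a ⟨u, hu, v, hv, rfl⟩ b ⟨u', hu', v', hv', rfl⟩ hab
    have hne : u ≠ u' ∨ v ≠ v' := by
      by_contra h
      push_neg at h
      exact hab (by simp only [h.1, h.2])
    rw [Set.disjoint_left]
    intro w hwa hwb
    have hwa' : max (d₁ u (fun i => w (Sum.inl i)) / r) (d₂ v (fun j => w (Sum.inr j)) / s) ≤ 1 := hwa
    have hwb' : max (d₁ u' (fun i => w (Sum.inl i)) / r) (d₂ v' (fun j => w (Sum.inr j)) / s) ≤ 1 := hwb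
    have ha1 : d₁ u (fun i => w (Sum.inl i)) ≤ r := (div_le_one hr).mp (le_of_max_le_left hwa')
    have ha2 : d₂ v (fun j => w (Sum.inr j)) ≤ s := (div_le_one hs).mp (le_of_max_le_right hwa')
    have hb1 : d₁ u' (fun i => w (Sum.inl i)) ≤ r := (div_le_one hr).mp (le_of_max_le_left hwb')
    have hb2 : d₂ v' (fun j => w (Sum.inr j)) ≤ s := (div_le_one hs).mp (le_of_max_le_right hwb')
    cases hne with
    | inl h => exact Set.disjoint_left.mp (h₁.2 hu hu' h) ha1 hb1
    | inr h => exact Set.disjoint_left.mp (h₂.2 hv hv' h) ha2 hb2
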